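/- The switching latent propensity score generates the upper cdf bound. Assume overlap and 0 < c̲ < p₁ < c̄ < 1. Define Ā₁ = P(Y = Q̄₁, X = 1) / (F̄₁(Q̄₁) − F̄₁(Q̄₁−)) when the denominator is nonzero and Ā₁ = p₁ otherwise, and define p̄₁ : ℝ → ℝ by p̄₁(y) = c̲ if y < Q̄₁, p̄₁(y) = Ā₁ if y = Q̄₁, and p̄₁(y) = c̄ if y > Q̄₁. Then Ā₁ ∈ [c̲, c̄], and for every y ∈ ℝ, E[1{Y ≤ y}·1{X=1} / p̄₁(Y)] = F̄₁(y). -/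

import Mathlib

open MeasureTheory ProbabilityTheory Set Filter Function
open scoped Topology

noncomputable section

set_option maxHeartbeats 2000000 in
/-- **The switching latent propensity score generates the upper cdf bound.**
Under overlap and `0 < c̲ < p₁ < c̄ < 1`, define `Ā₁` as the ratio of the point mass
`P(Y = Q̄₁, X = 1)` to the jump of `F̄₁` at `Q̄₁` (and `p₁` if the jump is zero), and the
switching propensity score `p̄₁` equal to `c̲` below `Q̄₁`, `Ā₁` at `Q̄₁`, and `c̄` above.
Then `Ā₁ ∈ [c̲, c̄]` and `E[1{Y ≤ y}·1{X=1} / p̄₁(Y)] = F̄₁(y)` for every `y`. -/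
theorem switching_propensity_generates_upper_bound
    {Ω : Type*} [MeasurableSpace Ω] (P : Measure Ω) [IsProbabilityMeasure P]
    (Y1 Y0 : Ω → ℝ) (X : Ω → Bool)
    (hY1 : Measurable Y1) (hY0 : Measurable Y0) (hX : Measurable X)
    (Y : Ω → ℝ) (hY : ∀ ω, Y ω = if X ω then Y1 ω else Y0 ω)
    (p1 p0 : ℝ) (hp1 : p1 = (P {ω | X ω = true}).toReal) (hp0 : p0 = 1 - p1)
    (hov : 0 < p1 ∧ p1 < 1)
    (cl cu : ℝ) (hcl : 0 < cl) (hclp1 : cl < p1) (hp1cu : p1 < cu) (hcu : cu < 1)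
    (G1 : ℝ → ℝ)
    (hG1 : ∀ y, G1 y = (P {ω | Y ω ≤ y ∧ X ω = true}).toReal / p1)
    (Fu1 : ℝ → ℝ)
    (hFu1 : ∀ y, Fu1 y = min (G1 y * p1 / cl) ((cu - p1) / cu + G1 y * p1 / cu))
    (τu1 Qu1 : ℝ)
    (hτu1 : τu1 = (cu - p1) * cl / (p1 * (cu - cl)))
    (hQu1 : Qu1 = sInf {y : ℝ | τu1 ≤ G1 y})
    (A1 : ℝ)
    (hA1 : A1 = if Fu1 Qu1 - Function.leftLim Fu1 Qu1 ≠ 0 then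
        (P {ω | Y ω = Qu1 ∧ X ω = true}).toReal / (Fu1 Qu1 - Function.leftLim Fu1 Qu1)
      else p1)
    (pbar : ℝ → ℝ)
    (hpbar : ∀ y : ℝ, pbar y = if y < Qu1 then cl else if y = Qu1 then A1 else cu) :
    A1 ∈ Set.Icc cl cu ∧
    ∀ y : ℝ, (∫ ω, (if Y ω ≤ y ∧ X ω = true then (1:ℝ) else 0) / pbar (Y ω) ∂P) = Fu1 y := by
  obtain ⟨hp1pos, hp1lt1⟩ := hov
  have hcu0 : 0 < cu := lt_trans hp1pos hp1cu
  have hclcu : cl < cu := lt_trans hclp1 hp1cu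
  have hcucl : (0:ℝ) < cu - cl := sub_pos.2 hclcu
  have hcup1 : (0:ℝ) < cu - p1 := sub_pos.2 hp1cu
  -- measurability
  have hYm : Measurable Y := by
    have hfe : Y = fun ω => if X ω then Y1 ω else Y0 ω := funext hY
    rw [hfe]
    exact Measurable.ite (hX (measurableSet_singleton true)) hY1 hY0
  have hXset : MeasurableSet {ω | X ω = true} := hX (measurableSet_singleton true)
  have hmeas : ∀ y : ℝ, MeasurableSet {ω | Y ω ≤ y ∧ X ω = true} :=
    fun y => (hYm measurableSet_Iic).inter hXset
  -- the subdistribution function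
  set ν : ℝ → ℝ := fun y => (P {ω | Y ω ≤ y ∧ X ω = true}).toReal with hν
  have hνmono : Monotone ν := fun a b hab =>
    ENNReal.toReal_mono (measure_ne_top P _) (measure_mono fun ω hω => ⟨hω.1.trans hab, hω.2⟩)
  have hνnn : ∀ y, 0 ≤ ν y := fun y => ENNReal.toReal_nonneg
  have hG1' : ∀ y, G1 y * p1 = ν y := by
    intro y; rw [hG1]; field_simp; rfl
  -- the threshold
  set t : ℝ := (cu - p1) * cl / (cu - cl) with htdef
  have hτp : τu1 * p1 = t := by
    rw [hτu1, htdef]; field_simp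
  have htpos : 0 < t := div_pos (mul_pos hcup1 hcl) hcucl
  have htlt : t < p1 := by
    rw [htdef, div_lt_iff₀ hcucl]; nlinarith
  have hSiff : ∀ y, τu1 ≤ G1 y ↔ t ≤ ν y := by
    intro y
    rw [hG1, le_div_iff₀ hp1pos, hτp]
  -- tendsto at top : ν n → p1
  have htop : Tendsto (fun n : ℕ => ν n) atTop (𝓝 p1) := by
    have hU : (⋃ n : ℕ, {ω | Y ω ≤ (n:ℝ) ∧ X ω = true}) = {ω | X ω = true} := by
      ext ω
      simp only [Set.mem_iUnion, Set.mem_setOf_eq]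
      constructor
      · rintro ⟨n, _, h⟩; exact h
      · intro h
        obtain ⟨n, hn⟩ := exists_nat_ge (Y ω)
        exact ⟨n, hn, h⟩
    have h1 : Tendsto (fun n : ℕ => P {ω | Y ω ≤ (n:ℝ) ∧ X ω = true}) atTop
        (𝓝 (P {ω | X ω = true})) := by
      have := tendsto_measure_iUnion_atTop (μ := P)
        (s := fun n : ℕ => {ω | Y ω ≤ (n:ℝ) ∧ X ω = true})
        (fun a b hab ω hω => ⟨hω.1.trans (by exact_mod_cast hab), hω.2⟩)
      rw [hU] at this
      exact Tendsto.congr (fun n => rfl) this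
    have h2 := (ENNReal.tendsto_toReal (measure_ne_top P _)).comp h1
    rw [hp1]
    exact h2
  -- tendsto at bot : ν (-n) → 0
  have hbot : Tendsto (fun n : ℕ => ν (-(n:ℝ))) atTop (𝓝 0) := by
    have hI : (⋂ n : ℕ, {ω | Y ω ≤ -(n:ℝ) ∧ X ω = true}) = (∅ : Set Ω) := by
      ext ω
      simp only [Set.mem_iInter, Set.mem_setOf_eq, Set.mem_empty_iff_false, iff_false, not_forall]
      obtain ⟨n, hn⟩ := exists_nat_gt (-(Y ω))
      exact ⟨n, fun h => by linarith [h.1]⟩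
    have h1 : Tendsto (fun n : ℕ => P {ω | Y ω ≤ -(n:ℝ) ∧ X ω = true}) atTop (𝓝 0) := by
      have := tendsto_measure_iInter_atTop (μ := P)
        (s := fun n : ℕ => {ω | Y ω ≤ -(n:ℝ) ∧ X ω = true})
        (fun n => (hmeas _).nullMeasurableSet)
        (fun a b hab ω hω => ⟨hω.1.trans (by simp; exact_mod_cast hab), hω.2⟩)
        ⟨0, measure_ne_top P _⟩
      rw [hI, measure_empty] at this
      exact Tendsto.congr (fun n => rfl) this
    have h2 := (ENNReal.tendsto_toReal (by simp : (0:ENNReal) ≠ ⊤)).comp h1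
    exact h2
  -- the set S
  set S : Set ℝ := {y : ℝ | τu1 ≤ G1 y} with hSdef
  have hSup : ∀ y ∈ S, ∀ z, y ≤ z → z ∈ S := by
    intro y hy z hyz
    rw [hSdef, Set.mem_setOf_eq, hSiff] at *
    exact le_trans hy (hνmono hyz)
  have hSne : S.Nonempty := by
    obtain ⟨n, hn⟩ := (htop.eventually (eventually_ge_nhds htlt)).exists
    exact ⟨n, (hSiff _).2 hn⟩
  obtain ⟨n0, hn0⟩ := (hbot.eventually (eventually_lt_nhds htpos)).exists
  have hn0S : (-(n0:ℝ)) ∉ S := by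
    rw [hSdef, Set.mem_setOf_eq, hSiff]; exact not_le.2 hn0
  have hbdd : BddBelow S := by
    refine ⟨-(n0:ℝ), fun s hs => ?_⟩
    by_contra h
    exact hn0S (hSup s hs _ (le_of_not_ge h))
  -- below Qu1 : ν < t
  have hlt : ∀ y, y < Qu1 → ν y < t := by
    intro y hy
    by_contra h
    have : y ∈ S := (hSiff y).2 (le_of_not_gt h)
    have := csInf_le hbdd this
    rw [← hQu1] at this
    linarith
  -- above Qu1 : in S
  have hgt : ∀ z, Qu1 < z → t ≤ ν z := by
    intro z hz
    rw [hQu1] at hz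
    obtain ⟨s, hsS, hsz⟩ := exists_lt_of_csInf_lt hSne hz
    exact (hSiff z).1 (hSup s hsS z hsz.le)
  -- right continuity at Qu1
  have hseqpos : ∀ n : ℕ, (0:ℝ) < 1/(n+1) := fun n => by positivity
  have hrc : Tendsto (fun n : ℕ => ν (Qu1 + 1/(n+1))) atTop (𝓝 (ν Qu1)) := by
    have hI : (⋂ n : ℕ, {ω | Y ω ≤ Qu1 + 1/(n+1) ∧ X ω = true})
        = {ω | Y ω ≤ Qu1 ∧ X ω = true} := by
      ext ω
      simp only [Set.mem_iInter, Set.mem_setOf_eq]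
      constructor
      · intro h
        refine ⟨?_, (h 0).2⟩
        by_contra hc
        push_neg at hc
        obtain ⟨n, hn⟩ := exists_nat_one_div_lt (sub_pos.2 hc)
        linarith [(h n).1]
      · intro h n
        exact ⟨h.1.trans (by linarith [hseqpos n]), h.2⟩
    have hanti : Antitone (fun n : ℕ => {ω | Y ω ≤ Qu1 + 1/((n:ℝ)+1) ∧ X ω = true}) := by
      intro a b hab ω hω
      refine ⟨hω.1.trans ?_, hω.2⟩
      have : (1:ℝ)/((b:ℝ)+1) ≤ 1/((a:ℝ)+1) :=
        one_div_le_one_div_of_le (by positivity) (by exact_mod_cast Nat.add_le_add_right hab 1)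
      linarith
    have h1 := tendsto_measure_iInter_atTop (μ := P)
      (s := fun n : ℕ => {ω | Y ω ≤ Qu1 + 1/((n:ℝ)+1) ∧ X ω = true})
      (fun n => (hmeas _).nullMeasurableSet) hanti ⟨0, measure_ne_top P _⟩
    replace h1 := Tendsto.congr (fun n => rfl) h1
    rw [hI] at h1
    have h2 := (ENNReal.tendsto_toReal (measure_ne_top P _)).comp h1
    exact h2
  have hge : t ≤ ν Qu1 :=
    ge_of_tendsto hrc (Filter.Eventually.of_forall fun n =>
      hgt _ (by linarith [hseqpos n]))
  -- left limit L
  set L : ℝ := (P {ω | Y ω < Qu1 ∧ X ω = true}).toReal with hLdef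
  have hLnn : 0 ≤ L := ENNReal.toReal_nonneg
  have hlc : Tendsto (fun n : ℕ => ν (Qu1 - 1/(n+1))) atTop (𝓝 L) := by
    have hU : (⋃ n : ℕ, {ω | Y ω ≤ Qu1 - 1/((n:ℝ)+1) ∧ X ω = true})
        = {ω | Y ω < Qu1 ∧ X ω = true} := by
      ext ω
      simp only [Set.mem_iUnion, Set.mem_setOf_eq]
      constructor
      · rintro ⟨n, h1, h2⟩
        exact ⟨lt_of_le_of_lt h1 (by linarith [hseqpos n]), h2⟩
      · rintro ⟨h1, h2⟩
        obtain ⟨n, hn⟩ := exists_nat_one_div_lt (sub_pos.2 h1)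
        exact ⟨n, by linarith, h2⟩
    have hmono : Monotone (fun n : ℕ => {ω | Y ω ≤ Qu1 - 1/((n:ℝ)+1) ∧ X ω = true}) := by
      intro a b hab ω hω
      refine ⟨hω.1.trans ?_, hω.2⟩
      have : (1:ℝ)/((b:ℝ)+1) ≤ 1/((a:ℝ)+1) :=
        one_div_le_one_div_of_le (by positivity) (by exact_mod_cast Nat.add_le_add_right hab 1)
      linarith
    have h1 := tendsto_measure_iUnion_atTop (μ := P)
      (s := fun n : ℕ => {ω | Y ω ≤ Qu1 - 1/((n:ℝ)+1) ∧ X ω = true}) hmono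
    replace h1 := Tendsto.congr (fun n => rfl) h1
    rw [hU] at h1
    have h2 := (ENNReal.tendsto_toReal (measure_ne_top P _)).comp h1
    exact h2
  -- ν tends to L from the left
  have hseqlt : Tendsto (fun n : ℕ => Qu1 - 1/((n:ℝ)+1)) atTop (𝓝[<] Qu1) := by
    apply tendsto_nhdsWithin_of_tendsto_nhds_of_eventually_within
    · have := tendsto_one_div_add_atTop_nhds_zero_nat (𝕜 := ℝ)
      have h2 := (tendsto_const_nhds (x := Qu1) (f := atTop (α := ℕ))).sub this
      simpa using h2
    · exact Filter.Eventually.of_forall fun n => by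
        simp only [Set.mem_Iio]; linarith [hseqpos n]
  have hTL : Tendsto ν (𝓝[<] Qu1) (𝓝 L) := by
    have h1 := hνmono.tendsto_leftLim Qu1
    have h2 := h1.comp hseqlt
    have h3 : Function.leftLim ν Qu1 = L := tendsto_nhds_unique (h2.congr fun n => rfl) hlc
    rwa [h3] at h1
  have hLle : L ≤ t := by
    refine le_of_tendsto hTL ?_
    filter_upwards [self_mem_nhdsWithin] with z hz
    exact (hlt z hz).le
  -- values of Fu1
  have key1 : ∀ u : ℝ, u ≤ t → u/cl ≤ (cu-p1)/cu + u/cu := by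
    intro u hu
    rw [htdef, le_div_iff₀ hcucl] at hu
    rw [← add_div, div_le_div_iff₀ hcl hcu0]
    nlinarith
  have key2 : ∀ u : ℝ, t ≤ u → (cu-p1)/cu + u/cu ≤ u/cl := by
    intro u hu
    rw [htdef, div_le_iff₀ hcucl] at hu
    rw [← add_div, div_le_div_iff₀ hcu0 hcl]
    nlinarith
  have hFlt : ∀ y, y < Qu1 → Fu1 y = ν y / cl := by
    intro y hy
    rw [hFu1, hG1']
    exact min_eq_left (key1 _ (hlt y hy).le)
  have hFhi : ∀ y, t ≤ ν y → Fu1 y = (cu-p1)/cu + ν y/cu := by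
    intro y hy
    rw [hFu1, hG1']
    exact min_eq_right (key2 _ hy)
  have hFq : Fu1 Qu1 = (cu-p1)/cu + ν Qu1/cu := hFhi Qu1 hge
  have hFleft : Function.leftLim Fu1 Qu1 = L / cl := by
    have hne_bot : (𝓝[<] Qu1) ≠ ⊥ := (nhdsLT_neBot Qu1).ne'
    refine leftLim_eq_of_tendsto ?_
    have h1 : Tendsto (fun y => ν y / cl) (𝓝[<] Qu1) (𝓝 (L/cl)) := hTL.div_const cl
    refine h1.congr' ?_
    filter_upwards [self_mem_nhdsWithin] with z hz
    exact (hFlt z hz).symm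
  -- the jump J and point mass m
  set J : ℝ := Fu1 Qu1 - Function.leftLim Fu1 Qu1 with hJdef
  set m : ℝ := (P {ω | Y ω = Qu1 ∧ X ω = true}).toReal with hmdef
  have hmnn : 0 ≤ m := ENNReal.toReal_nonneg
  set a : ℝ := ν Qu1 with hadef
  have hJval : J = (cu - p1 + a)/cu - L/cl := by
    rw [hJdef, hFq, hFleft, ← add_div]
  have hm : a = L + m := by
    have hsp : {ω | Y ω ≤ Qu1 ∧ X ω = true}
        = {ω | Y ω < Qu1 ∧ X ω = true} ∪ {ω | Y ω = Qu1 ∧ X ω = true} := by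
      ext ω
      simp only [Set.mem_setOf_eq, Set.mem_union]
      constructor
      · rintro ⟨h1, h2⟩
        rcases lt_or_eq_of_le h1 with h | h
        · exact Or.inl ⟨h, h2⟩
        · exact Or.inr ⟨h, h2⟩
      · rintro (⟨h1, h2⟩ | ⟨h1, h2⟩)
        · exact ⟨h1.le, h2⟩
        · exact ⟨h1.le, h2⟩
    have hdisj : Disjoint {ω | Y ω < Qu1 ∧ X ω = true} {ω | Y ω = Qu1 ∧ X ω = true} := by
      rw [Set.disjoint_left]
      rintro ω ⟨h1, _⟩ ⟨h2, _⟩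
      exact absurd h2 h1.ne
    have := measure_union (μ := P) hdisj ((hYm (measurableSet_singleton Qu1)).inter hXset)
    rw [← hsp] at this
    rw [hadef, hLdef, hmdef]
    show (P {ω | Y ω ≤ Qu1 ∧ X ω = true}).toReal = _
    rw [this, ENNReal.toReal_add (measure_ne_top P _) (measure_ne_top P _)]
  have hta : (cu - p1) * cl ≤ a * (cu - cl) := by
    have := hge
    rw [htdef, div_le_iff₀ hcucl] at this
    linarith
  have hLt : L * (cu - cl) ≤ (cu - p1) * cl := by
    have := hLle
    rw [htdef, le_div_iff₀ hcucl] at this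
    linarith
  have hJformula : J * (cl * cu) = (cu - p1 + a) * cl - L * cu := by
    rw [hJval]; field_simp
  have hJ1 : cl * J ≤ m := by
    have h : cl * J * cu ≤ m * cu := by nlinarith
    exact le_of_mul_le_mul_right h hcu0
  have hJ2 : m ≤ cu * J := by
    have h : m * cl ≤ cu * J * cl := by nlinarith
    exact le_of_mul_le_mul_right h hcl
  have hJnn : 0 ≤ J := by nlinarith
  -- A1 in [cl, cu]
  have hA1mem : A1 ∈ Set.Icc cl cu := by
    rw [hA1]
    split_ifs with hJ0
    · have hJpos : 0 < J := lt_of_le_of_ne hJnn (Ne.symm hJ0)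
      constructor
      · rw [le_div_iff₀ hJpos]; exact hJ1
      · rw [div_le_iff₀ hJpos]; exact hJ2
    · exact ⟨hclp1.le, hp1cu.le⟩
  -- key : m / A1 = J
  have hmA : m / A1 = J := by
    rw [hA1]
    split_ifs with hJ0
    · have hJpos : 0 < J := lt_of_le_of_ne hJnn (Ne.symm hJ0)
      have hmpos : 0 < m := lt_of_lt_of_le (mul_pos hcl hJpos) hJ1
      rw [div_div_eq_mul_div, mul_comm, mul_div_assoc, div_self hmpos.ne', mul_one]
    · push_neg at hJ0
      have hm0 : m = 0 := le_antisymm (by nlinarith) hmnn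
      rw [hm0, hJ0, zero_div]
  refine ⟨hA1mem, fun y => ?_⟩
  rcases lt_or_ge y Qu1 with hylt | hyge
  · -- case y < Qu1
    have hptw : ∀ ω, (if Y ω ≤ y ∧ X ω = true then (1:ℝ) else 0) / pbar (Y ω)
        = Set.indicator {ω | Y ω ≤ y ∧ X ω = true} (fun _ => cl⁻¹) ω := by
      intro ω
      by_cases h : Y ω ≤ y ∧ X ω = true
      · rw [if_pos h, Set.indicator_of_mem (show ω ∈ {ω | Y ω ≤ y ∧ X ω = true} from h),
          hpbar, if_pos (lt_of_le_of_lt h.1 hylt), one_div]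
      · rw [if_neg h, Set.indicator_of_notMem (show ω ∉ {ω | Y ω ≤ y ∧ X ω = true} from h),
          zero_div]
    simp only [hptw]
    rw [integral_indicator_const _ (hmeas y), smul_eq_mul, hFlt y hylt]
    rw [div_eq_mul_inv]
    rfl
  · -- case Qu1 ≤ y
    set S1 : Set Ω := {ω | Y ω < Qu1 ∧ X ω = true} with hS1
    set S2 : Set Ω := {ω | Y ω = Qu1 ∧ X ω = true} with hS2
    set S3 : Set Ω := {ω | Qu1 < Y ω ∧ Y ω ≤ y ∧ X ω = true} with hS3
    have hS1m : MeasurableSet S1 := (hYm measurableSet_Iio).inter hXset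
    have hS2m : MeasurableSet S2 := (hYm (measurableSet_singleton Qu1)).inter hXset
    have hS3m : MeasurableSet S3 :=
      (hYm measurableSet_Ioi).inter ((hYm measurableSet_Iic).inter hXset)
    have hptw : ∀ ω, (if Y ω ≤ y ∧ X ω = true then (1:ℝ) else 0) / pbar (Y ω)
        = Set.indicator S1 (fun _ => cl⁻¹) ω + Set.indicator S2 (fun _ => A1⁻¹) ω
          + Set.indicator S3 (fun _ => cu⁻¹) ω := by
      intro ω
      by_cases hx : X ω = true
      · rcases lt_trichotomy (Y ω) Qu1 with h | h | h
        · rw [if_pos ⟨le_trans h.le hyge, hx⟩, hpbar, if_pos h,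
            Set.indicator_of_mem (show ω ∈ S1 from ⟨h, hx⟩),
            Set.indicator_of_notMem (show ω ∉ S2 from fun hc => absurd hc.1 h.ne),
            Set.indicator_of_notMem (show ω ∉ S3 from fun hc => absurd hc.1 (not_lt.2 h.le)),
            one_div]
          ring
        · rw [if_pos ⟨h.le.trans hyge, hx⟩, hpbar, if_neg (by rw [h]; exact lt_irrefl _),
            if_pos h,
            Set.indicator_of_notMem (show ω ∉ S1 from fun hc => absurd h (ne_of_lt hc.1)),
            Set.indicator_of_mem (show ω ∈ S2 from ⟨h, hx⟩),
            Set.indicator_of_notMem (show ω ∉ S3 from fun hc => absurd h (ne_of_gt hc.1)),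
            one_div]
          ring
        · by_cases hyy : Y ω ≤ y
          · rw [if_pos ⟨hyy, hx⟩, hpbar, if_neg (not_lt.2 h.le), if_neg (ne_of_gt h),
              Set.indicator_of_notMem (show ω ∉ S1 from fun hc => absurd hc.1 (not_lt.2 h.le)),
              Set.indicator_of_notMem (show ω ∉ S2 from fun hc => absurd hc.1 (ne_of_gt h)),
              Set.indicator_of_mem (show ω ∈ S3 from ⟨h, hyy, hx⟩),
              one_div]
            ring
          · rw [if_neg (fun hc => hyy hc.1),
              Set.indicator_of_notMem (show ω ∉ S1 from fun hc => absurd hc.1 (not_lt.2 h.le)),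
              Set.indicator_of_notMem (show ω ∉ S2 from fun hc => absurd hc.1 (ne_of_gt h)),
              Set.indicator_of_notMem (show ω ∉ S3 from fun hc => hyy hc.2.1),
              zero_div]
            ring
      · rw [if_neg (fun hc => hx hc.2),
          Set.indicator_of_notMem (show ω ∉ S1 from fun hc => hx hc.2),
          Set.indicator_of_notMem (show ω ∉ S2 from fun hc => hx hc.2),
          Set.indicator_of_notMem (show ω ∉ S3 from fun hc => hx hc.2.2),
          zero_div]
        ring
    simp only [hptw]
    have hi1 : Integrable (Set.indicator S1 (fun _ => cl⁻¹)) P :=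
      (integrable_const _).indicator hS1m
    have hi2 : Integrable (Set.indicator S2 (fun _ => A1⁻¹)) P :=
      (integrable_const _).indicator hS2m
    have hi3 : Integrable (Set.indicator S3 (fun _ => cu⁻¹)) P :=
      (integrable_const _).indicator hS3m
    have hi12 : Integrable (fun ω => Set.indicator S1 (fun _ => cl⁻¹) ω
        + Set.indicator S2 (fun _ => A1⁻¹) ω) P := hi1.add hi2
    rw [integral_add hi12 hi3, integral_add hi1 hi2,
      integral_indicator_const _ hS1m, integral_indicator_const _ hS2m,
      integral_indicator_const _ hS3m, smul_eq_mul, smul_eq_mul, smul_eq_mul]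
    -- compute the three measures
    have hPS3 : (P S3).toReal = ν y - a := by
      have hsp : {ω | Y ω ≤ y ∧ X ω = true} = {ω | Y ω ≤ Qu1 ∧ X ω = true} ∪ S3 := by
        ext ω
        simp only [hS3, Set.mem_setOf_eq, Set.mem_union]
        constructor
        · rintro ⟨h1, h2⟩
          rcases le_or_gt (Y ω) Qu1 with h | h
          · exact Or.inl ⟨h, h2⟩
          · exact Or.inr ⟨h, h1, h2⟩
        · rintro (⟨h1, h2⟩ | ⟨h1, h2, h3⟩)
          · exact ⟨h1.trans hyge, h2⟩
          · exact ⟨h2, h3⟩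
      have hdisj : Disjoint {ω | Y ω ≤ Qu1 ∧ X ω = true} S3 := by
        rw [Set.disjoint_left]
        rintro ω ⟨h1, _⟩ ⟨h2, _⟩
        exact absurd h1 (not_le.2 h2)
      have hPsum := measure_union (μ := P) hdisj hS3m
      rw [← hsp] at hPsum
      have : ν y = a + (P S3).toReal := by
        rw [hadef]
        show (P {ω | Y ω ≤ y ∧ X ω = true}).toReal = _
        rw [hPsum, ENNReal.toReal_add (measure_ne_top P _) (measure_ne_top P _)]
      linarith
    have hPS1 : (P S1).toReal = L := rfl
    have hPS2 : (P S2).toReal = m := rfl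
    simp only [measureReal_def]
    rw [hPS1, hPS2, hPS3, hFhi y (hge.trans (hνmono hyge))]
    have hmid : m * A1⁻¹ = J := by rw [← div_eq_mul_inv]; exact hmA
    rw [hmid, hJval]
    have h1 : L * cl⁻¹ = L / cl := (div_eq_mul_inv L cl).symm
    have h2 : (ν y - a) * cu⁻¹ = ν y / cu - a / cu := by
      rw [← div_eq_mul_inv, sub_div]
    rw [h1, h2]
    have h3 : (cu - p1 + a)/cu = (cu - p1)/cu + a/cu := add_div _ _ _
    rw [h3]
    ring
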